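/- Let H be a complex Hilbert space and A, B bounded selfadjoint operators such that ⟨Ax,x⟩ ≥ 0 for all x with ⟨Bx,x⟩ = 0, and suppose ρ₋ < ρ₊ where [ρ₋, ρ₊] is the interval of ρ for which A + ρB is positive semidefinite. Then for every ρ in the open interval (ρ₋, ρ₊), ker(A + ρB) = ker(A) ∩ ker(B). -/

import Mathlib

open scoped InnerProductSpace

lemma quad_nonneg_imp {b c : ℝ} (hc : 0 ≤ c) (h : ∀ t : ℝ, 0 ≤ c * t ^ 2 + 2 * b * t) :
    b = 0 := by
  have hc1 : (0:ℝ) < c + 1 := by linarith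
  have h1 := h (-(b / (c + 1)))
  have h2 : 0 ≤ (c * (-(b / (c + 1))) ^ 2 + 2 * b * (-(b / (c + 1)))) * ((c+1)*(c+1)) :=
    mul_nonneg h1 (by positivity)
  have h3 : (c * (-(b / (c + 1))) ^ 2 + 2 * b * (-(b / (c + 1)))) * ((c+1)*(c+1))
      = -(b^2) * (c + 2) := by
    field_simp
    ring
  rw [h3] at h2
  nlinarith [sq_nonneg b]

lemma pos_inner_zero_imp {H : Type*} [NormedAddCommGroup H] [InnerProductSpace ℂ H]
    [CompleteSpace H] (T : H →L[ℂ] H) (hT : IsSelfAdjoint T)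
    (hpos : ∀ y : H, 0 ≤ (⟪T y, y⟫_ℂ).re) (x : H) (hx : (⟪T x, x⟫_ℂ).re = 0) :
    T x = 0 := by
  have hsym : ∀ u v : H, ⟪T u, v⟫_ℂ = ⟪u, T v⟫_ℂ := by
    intro u v
    rw [← hT.adjoint_eq, ContinuousLinearMap.adjoint_inner_left, hT.adjoint_eq]
  have key : (⟪T x, T x⟫_ℂ).re = 0 := by
    apply quad_nonneg_imp (hpos (T x))
    intro t
    have h := hpos (x + (t : ℂ) • T x)
    have hconj : ⟪T (T x), x⟫_ℂ = (starRingEnd ℂ) ⟪T x, T x⟫_ℂ := by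
      rw [hsym (T x) x]
      exact (inner_conj_symm _ _).symm
    have hexp : ⟪T (x + (t:ℂ) • T x), x + (t:ℂ) • T x⟫_ℂ
        = ⟪T x, x⟫_ℂ + (t:ℂ) * ⟪T x, T x⟫_ℂ + (t:ℂ) * (starRingEnd ℂ) ⟪T x, T x⟫_ℂ
          + ((t^2 : ℝ):ℂ) * ⟪T (T x), T x⟫_ℂ := by
      rw [map_add, map_smul]
      simp only [inner_add_left, inner_add_right, inner_smul_left, inner_smul_right,
        Complex.conj_ofReal, hconj]
      push_cast
      ring
    rw [hexp] at h
    simp only [Complex.add_re, Complex.mul_re, Complex.ofReal_re, Complex.ofReal_im,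
      Complex.conj_re, Complex.conj_im, hx, zero_mul, zero_sub, sub_zero, add_zero,
      zero_add, mul_neg, neg_neg] at h
    nlinarith [h]
  have hn : ‖T x‖ ^ 2 = 0 := by
    rw [← inner_self_eq_norm_sq (𝕜 := ℂ) (T x)]
    exact key
  simpa using pow_eq_zero_iff (n := 2) (by norm_num) |>.mp hn

/-- Lemma 2.3 in operator form: if the set of `ρ` for which `A + ρB` is positive
semidefinite is a nondegenerate interval `[ρ₋, ρ₊]`, then for every interior `ρ`,
`ker(A + ρB) = ker A ⊓ ker B`. -/
theorem interior_kernel_eq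
    {H : Type*} [NormedAddCommGroup H] [InnerProductSpace ℂ H] [CompleteSpace H]
    (A B : H →L[ℂ] H) (hA : IsSelfAdjoint A) (hB : IsSelfAdjoint B)
    (hmap : ∀ x : H, ⟪B x, x⟫_ℂ = 0 → 0 ≤ (⟪A x, x⟫_ℂ).re)
    (ρm ρp : ℝ) (hlt : ρm < ρp)
    (hint : ∀ ρ : ℝ,
      (∀ x : H, 0 ≤ (⟪(A + (ρ : ℂ) • B) x, x⟫_ℂ).re) ↔ ρ ∈ Set.Icc ρm ρp) :
    ∀ ρ ∈ Set.Ioo ρm ρp,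
      LinearMap.ker ((A + (ρ : ℂ) • B : H →L[ℂ] H) : H →ₗ[ℂ] H) =
        LinearMap.ker (A : H →ₗ[ℂ] H) ⊓ LinearMap.ker (B : H →ₗ[ℂ] H) := by
  intro ρ hρ
  apply le_antisymm
  · intro x hx
    have hx0 : A x + (ρ : ℂ) • B x = 0 := by
      simpa using LinearMap.mem_ker.mp hx
    -- value of the quadratic form at any ρ'
    have hform : ∀ ρ' : ℝ, (⟪(A + (ρ' : ℂ) • B) x, x⟫_ℂ).re
        = (ρ' - ρ) * (⟪B x, x⟫_ℂ).re := by
      intro ρ'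
      have hAeq : A x = -((ρ : ℂ) • B x) := eq_neg_of_add_eq_zero_left hx0
      have happ : (A + (ρ' : ℂ) • B) x = ((ρ' - ρ : ℝ) : ℂ) • (B x) := by
        have h1 : (A + (ρ' : ℂ) • B) x = A x + (ρ' : ℂ) • B x := rfl
        rw [h1, hAeq, show ((ρ' - ρ : ℝ) : ℂ) = (ρ' : ℂ) - (ρ : ℂ) by push_cast; ring,
          sub_smul]
        abel
      rw [happ, inner_smul_left]
      simp [Complex.conj_ofReal, Complex.mul_re]
    set b := (⟪B x, x⟫_ℂ).re with hbdef
    have hpMem : ρp ∈ Set.Icc ρm ρp := ⟨hlt.le, le_rfl⟩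
    have hmMem : ρm ∈ Set.Icc ρm ρp := ⟨le_rfl, hlt.le⟩
    have hp := (hint ρp).mpr hpMem x
    have hm := (hint ρm).mpr hmMem x
    rw [hform ρp] at hp
    rw [hform ρm] at hm
    have hb : b = 0 := by
      rcases hρ with ⟨h1, h2⟩
      nlinarith [hp, hm]
    -- T := A + ρp • B is positive selfadjoint and ⟪T x, x⟫.re = 0
    have hTsa : IsSelfAdjoint (A + (ρp : ℂ) • B) := by
      rw [IsSelfAdjoint, star_add, star_smul, hA.star_eq, hB.star_eq,
        Complex.star_def, Complex.conj_ofReal]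
    have hTpos : ∀ y : H, 0 ≤ (⟪(A + (ρp : ℂ) • B) y, y⟫_ℂ).re :=
      (hint ρp).mpr hpMem
    have hTx : (⟪(A + (ρp : ℂ) • B) x, x⟫_ℂ).re = 0 := by
      rw [hform ρp, hb, mul_zero]
    have hT0 : (A + (ρp : ℂ) • B) x = 0 :=
      pos_inner_zero_imp _ hTsa hTpos x hTx
    simp only [ContinuousLinearMap.add_apply, ContinuousLinearMap.coe_smul',
      Pi.smul_apply] at hT0
    -- subtract to get B x = 0
    have hBx : B x = 0 := by
      have hsub : ((ρp : ℂ) - (ρ : ℂ)) • B x = 0 := by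
        rw [sub_smul]
        have hd : (ρp : ℂ) • B x - (ρ : ℂ) • B x
            = (A x + (ρp : ℂ) • B x) - (A x + (ρ : ℂ) • B x) := by abel
        rw [hd, hT0, hx0, sub_zero]
      have hne : ((ρp : ℂ) - (ρ : ℂ)) ≠ 0 := by
        rw [sub_ne_zero]
        exact_mod_cast ne_of_gt hρ.2
      exact (smul_eq_zero.mp hsub).resolve_left hne
    have hAx : A x = 0 := by
      rw [hBx, smul_zero, add_zero] at hx0
      exact hx0
    exact ⟨hAx, hBx⟩
  · intro x hx
    obtain ⟨hAx, hBx⟩ := hx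
    have hAx' : A x = 0 := hAx
    have hBx' : B x = 0 := hBx
    have : (A + (ρ : ℂ) • B) x = A x + (ρ : ℂ) • B x := rfl
    show (A + (ρ : ℂ) • B) x = 0
    rw [this, hAx', hBx', smul_zero, add_zero]
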